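/- Let N ≥ 1 and let q : ℂ^N → ℝ be a real quadratic form, i.e. q(ζ) = B(ζ,ζ) for a symmetric ℝ-bilinear form B on ℂ^N viewed as a real vector space. Assume q(ζ) + q(iζ) ≥ 0 for all ζ ∈ ℂ^N, and let L ⊆ ℂ^N be a real linear subspace with dim_ℝ L = N on which q is negative definite (q(ζ) < 0 for all ζ ∈ L ∖ {0}). Then: (i) q(ζ) > 0 for all ζ ∈ iL ∖ {0}; (ii) L ∩ iL = {0}, so that ℂ^N = L ⊕ iL as real vector spaces (L is maximally totally real); (iii) the form B is nondegenerate of signature (N, N), i.e. the maximal dimension of a real subspace on which q is negative definite equals N and the maximal dimension of a real subspace on which q is positive definite equals N. -/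
import Mathlib


open Complex

noncomputable section

/-- `ℂ^N` with its Euclidean (Hermitian) norm, regarded also as a real vector space. -/
abbrev En (N : ℕ) := EuclideanSpace ℂ (Fin N)

/-- Multiplication by `i`, as an `ℝ`-linear map on `ℂ^N`. -/
def smulI (N : ℕ) : En N →ₗ[ℝ] En N where
  toFun ζ := Complex.I • ζ
  map_add' x y := smul_add _ x y
  map_smul' r x := smul_comm Complex.I r x

/-- let `q(ζ) = B(ζ,ζ)` be a real quadratic form on `ℂ^N` (`B` a symmetric
`ℝ`-bilinear form) with `q(ζ) + q(iζ) ≥ 0` (plurisubharmonicity), and let `L` be a real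
subspace of dimension `N` on which `q` is negative definite.  Then `q` is positive definite
on `iL`, `L` is maximally totally real (`L ∩ iL = 0`, `L + iL = ℂ^N`), and `B` is
nondegenerate of signature `(N, N)`. -/
theorem statement1 (N : ℕ) (hN : 1 ≤ N)
    (B : En N → En N → ℝ)
    (hsymm : ∀ ζ η, B ζ η = B η ζ)
    (haddl : ∀ ζ₁ ζ₂ η, B (ζ₁ + ζ₂) η = B ζ₁ η + B ζ₂ η)
    (hsmull : ∀ (r : ℝ) ζ η, B (r • ζ) η = r * B ζ η)
    (hpsh : ∀ ζ, 0 ≤ B ζ ζ + B (Complex.I • ζ) (Complex.I • ζ))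
    (L : Submodule ℝ (En N)) (hdim : Module.finrank ℝ L = N)
    (hneg : ∀ ζ ∈ L, ζ ≠ 0 → B ζ ζ < 0) :
    -- (i) `q > 0` on `iL ∖ {0}`
    (∀ ζ ∈ L.map (smulI N), ζ ≠ 0 → 0 < B ζ ζ) ∧
    -- (ii) `L ∩ iL = {0}` and `ℂ^N = L ⊕ iL`
    (L ⊓ L.map (smulI N) = ⊥ ∧ L ⊔ L.map (smulI N) = ⊤) ∧
    -- (iii) `B` is nondegenerate of signature `(N, N)`
    ((∀ ζ, (∀ η, B ζ η = 0) → ζ = 0) ∧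
     (∃ M : Submodule ℝ (En N), Module.finrank ℝ M = N ∧ ∀ ζ ∈ M, ζ ≠ 0 → B ζ ζ < 0) ∧
     (∀ M : Submodule ℝ (En N), (∀ ζ ∈ M, ζ ≠ 0 → B ζ ζ < 0) → Module.finrank ℝ M ≤ N) ∧
     (∃ M : Submodule ℝ (En N), Module.finrank ℝ M = N ∧ ∀ ζ ∈ M, ζ ≠ 0 → 0 < B ζ ζ) ∧
     (∀ M : Submodule ℝ (En N), (∀ ζ ∈ M, ζ ≠ 0 → 0 < B ζ ζ) → Module.finrank ℝ M ≤ N)) := by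
  classical
  have hB0l : ∀ η, B 0 η = 0 := by
    intro η
    have := hsmull 0 0 η
    simpa using this
  have hB0r : ∀ η, B η 0 = 0 := fun η => by rw [hsymm]; exact hB0l η
  have hI : Function.Injective (smulI N) := by
    intro x y h
    exact smul_right_injective (En N) Complex.I_ne_zero h
  have hdimI : Module.finrank ℝ (L.map (smulI N)) = N := by
    exact ((Submodule.equivMapOfInjective _ hI L).finrank_eq).symm.trans hdim
  -- part (i)
  have hpos : ∀ ζ ∈ L.map (smulI N), ζ ≠ 0 → 0 < B ζ ζ := by
    rintro ζ hζ hne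
    rcases Submodule.mem_map.mp hζ with ⟨η, hη, rfl⟩
    have hηne : η ≠ 0 := by rintro rfl; exact hne (map_zero _)
    have h1 := hneg η hη hηne
    have h2 := hpsh η
    have hrw : smulI N η = Complex.I • η := rfl
    rw [hrw]
    linarith
  -- L ⊓ iL = ⊥
  have hinf : L ⊓ L.map (smulI N) = ⊥ := by
    refine (Submodule.eq_bot_iff _).mpr ?_
    intro ζ hζ
    obtain ⟨h1, h2⟩ := Submodule.mem_inf.mp hζ
    by_contra hne
    exact absurd (hneg ζ h1 hne) (not_lt.mpr (le_of_lt (hpos ζ h2 hne)))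
  -- total dimension
  have htot : Module.finrank ℝ (En N) = 2 * N := by
    have h := Module.finrank_mul_finrank ℝ ℂ (En N)
    rw [Complex.finrank_real_complex, finrank_euclideanSpace_fin] at h
    omega
  have hsupinf := Submodule.finrank_sup_add_finrank_inf_eq L (L.map (smulI N))
  have hinf0 : Module.finrank ℝ ↥(L ⊓ L.map (smulI N)) = 0 := by
    rw [hinf]; exact finrank_bot ℝ _
  have hsup : L ⊔ L.map (smulI N) = ⊤ := by
    apply Submodule.eq_top_of_finrank_eq
    rw [htot]
    rw [hdim, hdimI, hinf0] at hsupinf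
    omega
  -- dimension counting lemma
  have hmeet : ∀ M₁ M₂ : Submodule ℝ (En N), N < Module.finrank ℝ M₁ →
      Module.finrank ℝ M₂ = N → ∃ ζ, ζ ∈ M₁ ⊓ M₂ ∧ ζ ≠ 0 := by
    intro M₁ M₂ h1 h2
    have hle : Module.finrank ℝ ↥(M₁ ⊔ M₂) ≤ 2 * N := htot ▸ Submodule.finrank_le _
    have heq := Submodule.finrank_sup_add_finrank_inf_eq M₁ M₂
    have hposd : 0 < Module.finrank ℝ ↥(M₁ ⊓ M₂) := by omega
    have hnb : (M₁ ⊓ M₂ : Submodule ℝ (En N)) ≠ ⊥ := by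
      intro h
      rw [h, finrank_bot] at hposd
      exact lt_irrefl 0 hposd
    obtain ⟨ζ, hζ, hne⟩ := (Submodule.ne_bot_iff _).mp hnb
    exact ⟨ζ, hζ, hne⟩
  -- nondegeneracy
  have hnd : ∀ ζ, (∀ η, B ζ η = 0) → ζ = 0 := by
    intro ζ h
    have hζtop : ζ ∈ L ⊔ L.map (smulI N) := hsup ▸ Submodule.mem_top
    obtain ⟨u, hu, v, hv, rfl⟩ := Submodule.mem_sup.mp hζtop
    have h1 : B u u + B v u = 0 := by have := h u; rwa [haddl] at this
    have h2 : B u v + B v v = 0 := by have := h v; rwa [haddl] at this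
    have hsym : B u v = B v u := hsymm u v
    have hequ : B u u = B v v := by linarith
    by_cases hu0 : u = 0
    · subst hu0
      by_cases hv0 : v = 0
      · subst hv0; simp
      · rw [hB0l] at hequ
        linarith [hpos v hv hv0]
    · by_cases hv0 : v = 0
      · subst hv0
        rw [hB0r] at hequ
        linarith [hneg u hu hu0]
      · linarith [hneg u hu hu0, hpos v hv hv0]
  -- maximality
  have hmaxneg : ∀ M : Submodule ℝ (En N), (∀ ζ ∈ M, ζ ≠ 0 → B ζ ζ < 0) →
      Module.finrank ℝ M ≤ N := by
    intro M hM
    by_contra hlt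
    push_neg at hlt
    obtain ⟨ζ, hζ, hne⟩ := hmeet M (L.map (smulI N)) hlt hdimI
    obtain ⟨h1, h2⟩ := Submodule.mem_inf.mp hζ
    linarith [hM ζ h1 hne, hpos ζ h2 hne]
  have hmaxpos : ∀ M : Submodule ℝ (En N), (∀ ζ ∈ M, ζ ≠ 0 → 0 < B ζ ζ) →
      Module.finrank ℝ M ≤ N := by
    intro M hM
    by_contra hlt
    push_neg at hlt
    obtain ⟨ζ, hζ, hne⟩ := hmeet M L hlt hdim
    obtain ⟨h1, h2⟩ := Submodule.mem_inf.mp hζ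
    linarith [hM ζ h1 hne, hneg ζ h2 hne]
  exact ⟨hpos, ⟨hinf, hsup⟩, hnd, ⟨L, hdim, hneg⟩, hmaxneg,
    ⟨L.map (smulI N), hdimI, hpos⟩, hmaxpos⟩

end
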